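/- (Glaeser-type inequality) Let f : U → ℝ be a nonnegative C² function on an open set U ⊂ ℝ^d, and suppose |∂_j f| ≤ M and |∂_j² f| ≤ M on U for some M > 0 and a fixed index j. Then for every x ∈ U at distance at least 1 from the complement of U, (∂_j f(x))² ≤ 2M f(x). -/

import Mathlib

open Set

/-- One dimensional second-order Taylor-type bound on `[0,1]`. -/
lemma taylor1 (g g' g'' : ℝ → ℝ) (K : ℝ)
    (hg : ∀ t ∈ Set.Icc (0:ℝ) 1, HasDerivAt g (g' t) t)
    (hg' : ∀ t ∈ Set.Icc (0:ℝ) 1, HasDerivAt g' (g'' t) t)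
    (hK : ∀ t ∈ Set.Icc (0:ℝ) 1, g'' t ≤ K) :
    g 1 ≤ g 0 + g' 0 + K / 2 := by
  set h : ℝ → ℝ := fun t => g 0 + g' 0 * t + K * t ^ 2 / 2 - g t with hhdef
  set h' : ℝ → ℝ := fun t => g' 0 + K * t - g' t with hh'def
  have hIoo : ∀ t ∈ Set.Ioo (0:ℝ) 1, t ∈ Set.Icc (0:ℝ) 1 := fun t ht => Ioo_subset_Icc_self ht
  have hdh : ∀ t ∈ Set.Icc (0:ℝ) 1, HasDerivAt h (h' t) t := by
    intro t ht
    have : HasDerivAt (fun t => g 0 + g' 0 * t + K * t ^ 2 / 2) (g' 0 + K * t) t := by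
      have h1 := (((hasDerivAt_const t (g 0)).add
        ((hasDerivAt_id t).const_mul (g' 0))).add
        (((hasDerivAt_pow 2 t)).const_mul K |>.div_const 2))
      convert h1 using 1
      · rfl
      · rfl
      · funext s; simp
      push_cast
      ring
    exact this.sub (hg t ht)
  have hdh' : ∀ t ∈ Set.Icc (0:ℝ) 1, HasDerivAt h' (K - g'' t) t := by
    intro t ht
    have h1 : HasDerivAt (fun t : ℝ => g' 0 + K * t) (K) t := by
      simpa using ((hasDerivAt_id t).const_mul K).const_add (g' 0)
    exact h1.sub (hg' t ht)
  have hintD : interior (Set.Icc (0:ℝ) 1) = Set.Ioo 0 1 := interior_Icc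
  -- h' is monotone on [0,1]
  have mono1 : MonotoneOn h' (Set.Icc 0 1) := by
    apply monotoneOn_of_deriv_nonneg (convex_Icc 0 1)
    · exact fun t ht => ((hdh' t ht).continuousAt).continuousWithinAt
    · rw [hintD]
      exact fun t ht => ((hdh' t (hIoo t ht)).differentiableAt).differentiableWithinAt
    · rw [hintD]
      intro t ht
      rw [(hdh' t (hIoo t ht)).deriv]
      have := hK t (hIoo t ht)
      linarith
  have h'0 : h' 0 = 0 := by simp [hh'def]
  have h'nonneg : ∀ t ∈ Set.Ioo (0:ℝ) 1, 0 ≤ h' t := by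
    intro t ht
    have := mono1 (Set.left_mem_Icc.2 one_pos.le) (hIoo t ht) ht.1.le
    linarith [h'0]
  have mono2 : MonotoneOn h (Set.Icc 0 1) := by
    apply monotoneOn_of_deriv_nonneg (convex_Icc 0 1)
    · exact fun t ht => ((hdh t ht).continuousAt).continuousWithinAt
    · rw [hintD]
      exact fun t ht => ((hdh t (hIoo t ht)).differentiableAt).differentiableWithinAt
    · rw [hintD]
      intro t ht
      rw [(hdh t (hIoo t ht)).deriv]
      exact h'nonneg t ht
  have := mono2 (Set.left_mem_Icc.2 one_pos.le) (Set.right_mem_Icc.2 one_pos.le) one_pos.le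
  simp only [hhdef] at this
  nlinarith [this]

theorem stmt_9 (d : ℕ) (U : Set (EuclideanSpace ℝ (Fin d))) (hU : IsOpen U)
    (f : EuclideanSpace ℝ (Fin d) → ℝ) (hf : ContDiffOn ℝ 2 f U)
    (hnn : ∀ x ∈ U, 0 ≤ f x) (M : ℝ) (hM : 0 < M) (j : Fin d)
    (hd1 : ∀ x ∈ U, |fderiv ℝ f x (EuclideanSpace.single j (1 : ℝ))| ≤ M)
    (hd2 : ∀ x ∈ U,
      |fderiv ℝ (fun y => fderiv ℝ f y (EuclideanSpace.single j (1 : ℝ))) x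
        (EuclideanSpace.single j (1 : ℝ))| ≤ M) :
    ∀ x ∈ U, (∀ y, ‖y - x‖ ≤ 1 → y ∈ U) →
      (fderiv ℝ f x (EuclideanSpace.single j (1 : ℝ))) ^ 2 ≤ 2 * M * f x := by
  intro x hx hball
  set e : EuclideanSpace ℝ (Fin d) := EuclideanSpace.single j (1 : ℝ) with he
  have hene : ‖e‖ = 1 := by simp [he, EuclideanSpace.norm_single]
  set D : ℝ := fderiv ℝ f x e with hD
  set r : ℝ := -D / M with hr
  have hDle : |D| ≤ M := hd1 x hx
  have habsr : |r| ≤ 1 := by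
    rw [hr, abs_div, abs_neg, abs_of_pos hM]
    exact div_le_one_of_le₀ hDle hM.le
  -- the path
  set γ : ℝ → EuclideanSpace ℝ (Fin d) := fun t => x + (t * r) • e with hγ
  have hγmem : ∀ t ∈ Set.Icc (0:ℝ) 1, γ t ∈ U := by
    intro t ht
    apply hball
    have h0 : γ t - x = (t * r) • e := by simp [hγ]
    rw [h0, norm_smul, hene, mul_one, Real.norm_eq_abs, abs_mul]
    have h1 : |t| ≤ 1 := abs_le.2 ⟨by linarith [ht.1], ht.2⟩
    calc |t| * |r| ≤ 1 * 1 := mul_le_mul h1 habsr (abs_nonneg r) zero_le_one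
      _ = 1 := mul_one 1
  have hγd : ∀ t : ℝ, HasDerivAt γ (r • e) t := by
    intro t
    have : HasDerivAt (fun t : ℝ => (t * r) • e) ((1 * r) • e) t :=
      ((hasDerivAt_id t).mul_const r).smul_const e
    simpa [hγ] using this.const_add x
  -- differentiability facts
  have hf1 : ContDiffOn ℝ 1 (fderiv ℝ f) U := by
    apply hf.fderiv_of_isOpen hU
    norm_num
  have hfd : ∀ z ∈ U, HasFDerivAt f (fderiv ℝ f z) z := by
    intro z hz
    exact ((hf.differentiableOn (by norm_num)).differentiableAt
      (hU.mem_nhds hz)).hasFDerivAt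
  have hfd2 : ∀ z ∈ U, HasFDerivAt (fun y => fderiv ℝ f y e)
      (fderiv ℝ (fun y => fderiv ℝ f y e) z) z := by
    intro z hz
    have hdf : DifferentiableAt ℝ (fderiv ℝ f) z :=
      (hf1.differentiableOn one_ne_zero).differentiableAt (hU.mem_nhds hz)
    have : DifferentiableAt ℝ (fun y => fderiv ℝ f y e) z := by
      exact (ContinuousLinearMap.apply ℝ ℝ e).differentiableAt.comp z hdf
    exact this.hasFDerivAt
  -- the 1-d functions
  set g : ℝ → ℝ := fun t => f (γ t) with hg
  set g' : ℝ → ℝ := fun t => r * fderiv ℝ f (γ t) e with hg'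
  set g'' : ℝ → ℝ := fun t => r * (fderiv ℝ (fun y => fderiv ℝ f y e) (γ t) (r • e)) with hg''
  have hdg : ∀ t ∈ Set.Icc (0:ℝ) 1, HasDerivAt g (g' t) t := by
    intro t ht
    have := (hfd (γ t) (hγmem t ht)).comp_hasDerivAt t (hγd t)
    simpa [hg, hg', map_smul, smul_eq_mul, mul_comm, Function.comp_def] using this
  have hdg' : ∀ t ∈ Set.Icc (0:ℝ) 1, HasDerivAt g' (g'' t) t := by
    intro t ht
    have h1 := (hfd2 (γ t) (hγmem t ht)).comp_hasDerivAt t (hγd t)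
    have h2 := h1.const_mul r
    simpa [hg', hg''] using h2
  have hKb : ∀ t ∈ Set.Icc (0:ℝ) 1, g'' t ≤ M * r ^ 2 := by
    intro t ht
    have hb := hd2 (γ t) (hγmem t ht)
    have : g'' t = r ^ 2 * (fderiv ℝ (fun y => fderiv ℝ f y e) (γ t) e) := by
      rw [hg'']
      simp only [map_smul, smul_eq_mul]
      ring
    rw [this]
    calc r ^ 2 * (fderiv ℝ (fun y => fderiv ℝ f y e) (γ t) e)
        ≤ r ^ 2 * M := by
          apply mul_le_mul_of_nonneg_left _ (sq_nonneg r)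
          exact le_trans (le_abs_self _) hb
      _ = M * r ^ 2 := by ring
  have key := taylor1 g g' g'' (M * r ^ 2) hdg hdg' hKb
  have hg0 : g 0 = f x := by simp [hg, hγ]
  have hg'0 : g' 0 = r * D := by simp [hg', hγ, hD]
  have hnn1 : 0 ≤ g 1 := hnn (γ 1) (hγmem 1 (Set.right_mem_Icc.2 one_pos.le))
  rw [hg0, hg'0] at key
  -- 0 ≤ f x + r * D + M * r^2 / 2, with r = -D/M
  have hM' : M ≠ 0 := hM.ne'
  have hrD : r * D = -D ^ 2 / M := by rw [hr]; ring
  have hr2 : M * r ^ 2 = D ^ 2 / M := by rw [hr]; field_simp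
  rw [hrD, hr2] at key
  have h6 : 0 ≤ f x + -D ^ 2 / M + D ^ 2 / M / 2 := le_trans hnn1 key
  have h4 : 0 ≤ M * (f x + -D ^ 2 / M + D ^ 2 / M / 2) := mul_nonneg hM.le h6
  have h5 : M * (f x + -D ^ 2 / M + D ^ 2 / M / 2) = M * f x - D ^ 2 / 2 := by
    field_simp
    ring
  rw [h5] at h4
  show D ^ 2 ≤ 2 * M * f x
  linarith
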